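/- Let n ≥ 1, ε ∈ (0,1], γ ∈ (0,1/2], and let y : Fin n → ℝ take values in {−1,1}. Let T be a natural number with T > 2·log(1/ε)/γ². Suppose we are given hypotheses h¹,…,h^T : Fin n → ℝ, each taking values in {−1,1}, and distributions D¹,…,D^T on Fin n such that: (i) D¹ is the uniform distribution on Fin n; (ii) each D^t is ε-smooth; (iii) (weak learning) for every t, ∑_i D^t(i)·1[h^t(i) = y(i)] ≥ 1/2 + γ; (iv) (multiplicative update and projection) for every t < T, letting ℓ^t(i) = 1[h^t(i) = y(i)], Z^t = ∑_i D^t(i)·(1−γ)^{ℓ^t(i)}, and D̂^{t+1}(i) = D^t(i)·(1−γ)^{ℓ^t(i)}/Z^t, the distribution D^{t+1} satisfies RE(D^{t+1} ‖ D̂^{t+1}) ≤ RE(D ‖ D̂^{t+1}) for every ε-smooth distribution D on Fin n. Then the majority-vote hypothesis errs on fewer than εn points, i.e., the cardinality of {i : y(i)·∑_{t=1}^T h^t(i) ≤ 0} is strictly less than ε·n. -/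

import Mathlib

/-- `D` is a probability distribution on `Fin n`. -/
def IsDistribution {n : ℕ} (D : Fin n → ℝ) : Prop :=
  (∀ i, 0 ≤ D i) ∧ ∑ i, D i = 1

/-- `D` is `ε`-smooth: every coordinate is at most `1/(ε·n)`. -/
def IsSmooth {n : ℕ} (ε : ℝ) (D : Fin n → ℝ) : Prop :=
  ∀ i, D i ≤ 1 / (ε * n)

/-- Relative entropy `RE(p ‖ q) = ∑ i, p i · log (p i / q i)`, where terms with
`p i = 0` contribute `0`. -/
noncomputable def RE {n : ℕ} (p q : Fin n → ℝ) : ℝ :=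
  ∑ i, if p i = 0 then 0 else p i * Real.log (p i / q i)

noncomputable def qfun {n : ℕ} (γ : ℝ) (y hf Dt : Fin n → ℝ) : Fin n → ℝ :=
  fun i => Dt i * (if hf i = y i then 1 - γ else 1) /
    (∑ j, Dt j * (if hf j = y j then 1 - γ else 1))

lemma xlogx_line (a b : ℝ) (ha : 0 < a) (hb : 0 < b) :
    (b - a) * (Real.log a + 1) ≤ b * Real.log b - a * Real.log a := by
  have h1 : Real.log (a / b) ≤ a / b - 1 := Real.log_le_sub_one_of_pos (by positivity)
  have h2 : Real.log (a / b) = Real.log a - Real.log b := Real.log_div ha.ne' hb.ne'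
  rw [h2] at h1
  have h3 : b * (Real.log a - Real.log b) ≤ b * (a / b - 1) :=
    mul_le_mul_of_nonneg_left h1 hb.le
  have h4 : b * (a / b - 1) = a - b := by field_simp
  nlinarith [h3]

lemma RE_nonneg {n : ℕ} (p q : Fin n → ℝ) (hp : ∀ i, 0 ≤ p i) (hps : ∑ i, p i = 1)
    (hq : ∀ i, 0 ≤ q i) (hqs : ∑ i, q i ≤ 1) (hpq : ∀ i, p i ≠ 0 → 0 < q i) :
    0 ≤ RE p q := by
  have key : ∀ i, p i - q i ≤ (if p i = 0 then 0 else p i * Real.log (p i / q i)) := by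
    intro i
    by_cases hpi : p i = 0
    · simp [hpi, hq i]
    · simp only [hpi, if_false]
      have hpi' : 0 < p i := lt_of_le_of_ne (hp i) (Ne.symm hpi)
      have hqi : 0 < q i := hpq i hpi
      have h1 : Real.log (q i / p i) ≤ q i / p i - 1 := Real.log_le_sub_one_of_pos (by positivity)
      have h2 : Real.log (p i / q i) = - Real.log (q i / p i) := by
        rw [Real.log_div hpi'.ne' hqi.ne', Real.log_div hqi.ne' hpi'.ne']; ring
      rw [h2]
      have h3 : p i * (1 - q i / p i) ≤ p i * (- Real.log (q i / p i)) := by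
        apply mul_le_mul_of_nonneg_left (by linarith) hpi'.le
      have h4 : p i * (1 - q i / p i) = p i - q i := by field_simp
      linarith
  have hsum : ∑ i, (p i - q i) ≤ ∑ i, (if p i = 0 then 0 else p i * Real.log (p i / q i)) :=
    Finset.sum_le_sum (fun i _ => key i)
  rw [Finset.sum_sub_distrib, hps] at hsum
  unfold RE
  linarith

lemma pyth_aux {n : ℕ} (q p0 ps : Fin n → ℝ) (hq : ∀ i, 0 < q i) (hp0 : ∀ i, 0 < p0 i)
    (hps : ∀ i, 0 ≤ ps i) (hs0 : ∑ i, p0 i = 1) (hss : ∑ i, ps i = 1)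
    (hmin : ∀ l : ℝ, 0 < l → l < 1 →
      RE p0 q ≤ RE (fun i => p0 i + l * (ps i - p0 i)) q) :
    0 ≤ ∑ i, (ps i - p0 i) * (Real.log (p0 i) - Real.log (q i)) := by
  set F : ℝ → ℝ := fun l => ∑ i, (ps i - p0 i) * (Real.log (p0 i + l * (ps i - p0 i)) - Real.log (q i)) with hF
  have hpl : ∀ l : ℝ, 0 ≤ l → l < 1 → ∀ i, 0 < p0 i + l * (ps i - p0 i) := by
    intro l hl0 hl1 i
    have : p0 i + l * (ps i - p0 i) = (1 - l) * p0 i + l * ps i := by ring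
    rw [this]
    have h1 : 0 < (1 - l) * p0 i := mul_pos (by linarith) (hp0 i)
    have h2 : 0 ≤ l * ps i := mul_nonneg hl0 (hps i)
    linarith
  have claim1 : ∀ l : ℝ, 0 < l → l < 1 → 0 ≤ F l := by
    intro l hl0 hl1
    have hm := hmin l hl0 hl1
    have hRE0 : RE p0 q = ∑ i, (p0 i * Real.log (p0 i) - p0 i * Real.log (q i)) := by
      unfold RE
      apply Finset.sum_congr rfl
      intro i _
      rw [if_neg (hp0 i).ne', Real.log_div (hp0 i).ne' (hq i).ne']
      ring
    have hREl : RE (fun i => p0 i + l * (ps i - p0 i)) q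
        = ∑ i, ((p0 i + l * (ps i - p0 i)) * Real.log (p0 i + l * (ps i - p0 i))
            - (p0 i + l * (ps i - p0 i)) * Real.log (q i)) := by
      unfold RE
      apply Finset.sum_congr rfl
      intro i _
      rw [if_neg (hpl l hl0.le hl1 i).ne', Real.log_div (hpl l hl0.le hl1 i).ne' (hq i).ne']
      ring
    rw [hRE0, hREl] at hm
    have hterm : ∀ i : Fin n,
        ((p0 i + l * (ps i - p0 i)) * Real.log (p0 i + l * (ps i - p0 i))
            - (p0 i + l * (ps i - p0 i)) * Real.log (q i))
          - (p0 i * Real.log (p0 i) - p0 i * Real.log (q i))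
        ≤ l * ((ps i - p0 i) * (Real.log (p0 i + l * (ps i - p0 i)) - Real.log (q i))
              + (ps i - p0 i)) := by
      intro i
      have hb := hpl l hl0.le hl1 i
      have h2 := xlogx_line (p0 i + l * (ps i - p0 i)) (p0 i) hb (hp0 i)
      nlinarith [h2]
    have hsum : ∑ i, (((p0 i + l * (ps i - p0 i)) * Real.log (p0 i + l * (ps i - p0 i))
            - (p0 i + l * (ps i - p0 i)) * Real.log (q i))
          - (p0 i * Real.log (p0 i) - p0 i * Real.log (q i)))
        ≤ ∑ i, l * ((ps i - p0 i) * (Real.log (p0 i + l * (ps i - p0 i)) - Real.log (q i))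
              + (ps i - p0 i)) :=
      Finset.sum_le_sum (fun i _ => hterm i)
    rw [Finset.sum_sub_distrib] at hsum
    have hzero : ∑ i, (ps i - p0 i) = 0 := by
      rw [Finset.sum_sub_distrib, hs0, hss]; ring
    have hrhs : ∑ i, l * ((ps i - p0 i) * (Real.log (p0 i + l * (ps i - p0 i)) - Real.log (q i))
              + (ps i - p0 i)) = l * (F l) := by
      rw [← Finset.mul_sum, Finset.sum_add_distrib, hzero, hF]
      ring
    rw [hrhs] at hsum
    exact nonneg_of_mul_nonneg_right (by linarith) hl0
  have hcont : Filter.Tendsto F (nhdsWithin 0 (Set.Ioi 0)) (nhds (F 0)) := by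
    have hc : ContinuousAt F 0 := by
      apply tendsto_finset_sum
      intro i _
      show ContinuousAt _ 0
      apply ContinuousAt.mul continuousAt_const
      apply ContinuousAt.sub _ continuousAt_const
      have hinner : ContinuousAt (fun l : ℝ => p0 i + l * (ps i - p0 i)) 0 := by fun_prop
      have hpos : (fun l : ℝ => p0 i + l * (ps i - p0 i)) 0 ≠ 0 := by
        simp only [zero_mul, add_zero]
        exact (hp0 i).ne'
      exact hinner.log hpos
    exact hc.continuousWithinAt.tendsto
  have hev : ∀ᶠ l in nhdsWithin (0:ℝ) (Set.Ioi 0), 0 ≤ F l := by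
    filter_upwards [Ioo_mem_nhdsGT_of_mem (Set.mem_Ico.mpr ⟨le_refl (0:ℝ), one_pos⟩)] with l hl
    exact claim1 l hl.1 hl.2
  have hlim := ge_of_tendsto hcont hev
  have hF0 : F 0 = ∑ i, (ps i - p0 i) * (Real.log (p0 i) - Real.log (q i)) := by
    rw [hF]
    apply Finset.sum_congr rfl
    intro i _
    norm_num
  linarith [hF0 ▸ hlim]

lemma RE_eq_of_pos {n : ℕ} (p q : Fin n → ℝ) (hp : ∀ i, 0 < p i) (hq : ∀ i, 0 < q i) :
    RE p q = ∑ i, p i * (Real.log (p i) - Real.log (q i)) := by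
  unfold RE
  apply Finset.sum_congr rfl
  intro i _
  rw [if_neg (hp i).ne', Real.log_div (hp i).ne' (hq i).ne']

lemma proj_le {n : ℕ} (ε : ℝ) (q p0 ps : Fin n → ℝ)
    (hq : ∀ i, 0 < q i) (hqs : ∑ i, q i = 1)
    (hp0 : ∀ i, 0 < p0 i) (hp0d : IsDistribution p0) (hp0s : IsSmooth ε p0)
    (hpsd : IsDistribution ps) (hpss : IsSmooth ε ps)
    (hmin : ∀ p, IsDistribution p → IsSmooth ε p → RE p0 q ≤ RE p q) :
    RE ps p0 ≤ RE ps q := by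
  have key : 0 ≤ ∑ i, (ps i - p0 i) * (Real.log (p0 i) - Real.log (q i)) := by
    apply pyth_aux q p0 ps hq hp0 hpsd.1 hp0d.2 hpsd.2
    intro l hl0 hl1
    apply hmin
    · constructor
      · intro i
        show 0 ≤ p0 i + l * (ps i - p0 i)
        have heq : p0 i + l * (ps i - p0 i) = (1 - l) * p0 i + l * ps i := by ring
        rw [heq]
        have h1 : 0 ≤ (1 - l) * p0 i := mul_nonneg (by linarith) (hp0 i).le
        have h2 : 0 ≤ l * ps i := mul_nonneg hl0.le (hpsd.1 i)
        linarith
      · show ∑ i, (p0 i + l * (ps i - p0 i)) = 1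
        have heq : ∑ i, (p0 i + l * (ps i - p0 i))
            = ∑ i, p0 i + l * (∑ i, ps i - ∑ i, p0 i) := by
          rw [Finset.sum_add_distrib, ← Finset.mul_sum, Finset.sum_sub_distrib]
        rw [heq, hp0d.2, hpsd.2]; ring
    · intro i
      have h1 : p0 i + l * (ps i - p0 i) = (1 - l) * p0 i + l * ps i := by ring
      show p0 i + l * (ps i - p0 i) ≤ 1 / (ε * n)
      rw [h1]
      calc (1 - l) * p0 i + l * ps i
          ≤ (1 - l) * (1 / (ε * n)) + l * (1 / (ε * n)) := by
            apply add_le_add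
            · exact mul_le_mul_of_nonneg_left (hp0s i) (by linarith)
            · exact mul_le_mul_of_nonneg_left (hpss i) hl0.le
        _ = 1 / (ε * n) := by ring
  have hsplit : ∑ i, (ps i - p0 i) * (Real.log (p0 i) - Real.log (q i))
      = ∑ i, ps i * (Real.log (p0 i) - Real.log (q i))
        - ∑ i, p0 i * (Real.log (p0 i) - Real.log (q i)) := by
    rw [← Finset.sum_sub_distrib]
    apply Finset.sum_congr rfl
    intro i _; ring
  have hRE0 : RE p0 q = ∑ i, p0 i * (Real.log (p0 i) - Real.log (q i)) :=
    RE_eq_of_pos p0 q hp0 hq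
  have hge : 0 ≤ RE p0 q :=
    RE_nonneg p0 q hp0d.1 hp0d.2 (fun i => (hq i).le) (le_of_eq hqs) (fun i _ => hq i)
  have hdiff : RE ps q - RE ps p0 = ∑ i, ps i * (Real.log (p0 i) - Real.log (q i)) := by
    unfold RE
    rw [← Finset.sum_sub_distrib]
    apply Finset.sum_congr rfl
    intro i _
    by_cases hpsi : ps i = 0
    · simp [hpsi]
    · rw [if_neg hpsi, if_neg hpsi, Real.log_div hpsi (hq i).ne',
        Real.log_div hpsi (hp0 i).ne']
      ring
  linarith [hsplit ▸ key, hRE0 ▸ hge, hdiff]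

lemma minimizer_pos {n : ℕ} (ε : ℝ) (q p0 : Fin n → ℝ) (hq : ∀ i, 0 < q i)
    (hd : IsDistribution p0) (hs : IsSmooth ε p0)
    (hmin : ∀ p, IsDistribution p → IsSmooth ε p → RE p0 q ≤ RE p q) :
    ∀ i, 0 < p0 i := by
  intro i
  by_contra hi
  have hi0 : p0 i = 0 := le_antisymm (not_lt.mp hi) (hd.1 i)
  obtain ⟨j, -, hj0⟩ : ∃ j ∈ Finset.univ, p0 j ≠ 0 :=
    Finset.exists_ne_zero_of_sum_ne_zero (by rw [hd.2]; norm_num)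
  have hj : 0 < p0 j := lt_of_le_of_ne (hd.1 j) (Ne.symm hj0)
  have hij : i ≠ j := by rintro rfl; exact hj0 hi0
  set C : ℝ := Real.log (q j) - Real.log (p0 j / 2) - 1 with hC
  set δ : ℝ := min (p0 j / 2) (Real.exp (Real.log (q i) - C - 1)) with hδdef
  have hδ : 0 < δ := lt_min (by linarith) (Real.exp_pos _)
  have hδj : δ ≤ p0 j / 2 := min_le_left _ _
  have hlogδ : Real.log δ ≤ Real.log (q i) - C - 1 := by
    calc Real.log δ ≤ Real.log (Real.exp (Real.log (q i) - C - 1)) :=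
          Real.log_le_log hδ (min_le_right _ _)
      _ = Real.log (q i) - C - 1 := Real.log_exp _
  set p' : Fin n → ℝ := fun k => if k = i then δ else if k = j then p0 j - δ else p0 k with hp'
  have hp'i : p' i = δ := by simp [hp']
  have hp'j : p' j = p0 j - δ := by simp [hp', hij.symm]
  have hp'other : ∀ k, k ≠ i → k ≠ j → p' k = p0 k := by
    intro k h1 h2; simp [hp', h1, h2]
  have split : ∀ f : Fin n → ℝ,
      ∑ k, f k = f i + (f j + ∑ k ∈ (Finset.univ.erase i).erase j, f k) := by
    intro f
    rw [Finset.add_sum_erase _ f (Finset.mem_erase.mpr ⟨hij.symm, Finset.mem_univ j⟩),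
      Finset.add_sum_erase _ f (Finset.mem_univ i)]
  have hrest : ∑ k ∈ (Finset.univ.erase i).erase j, p' k
      = ∑ k ∈ (Finset.univ.erase i).erase j, p0 k := by
    apply Finset.sum_congr rfl
    intro k hk
    have h2 := (Finset.mem_erase.mp hk).1
    have h1 := (Finset.mem_erase.mp (Finset.mem_erase.mp hk).2).1
    exact hp'other k h1 h2
  have hp'dist : IsDistribution p' := by
    constructor
    · intro k
      by_cases h1 : k = i
      · rw [h1, hp'i]; exact hδ.le
      · by_cases h2 : k = j
        · rw [h2, hp'j]; linarith
        · rw [hp'other k h1 h2]; exact hd.1 k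
    · rw [split p', hp'i, hp'j, hrest]
      have := split p0
      rw [hd.2, hi0] at this
      linarith
  have hp'smooth : IsSmooth ε p' := by
    intro k
    by_cases h1 : k = i
    · rw [h1, hp'i]
      calc δ ≤ p0 j / 2 := hδj
        _ ≤ p0 j := by linarith
        _ ≤ 1 / (ε * n) := hs j
    · by_cases h2 : k = j
      · rw [h2, hp'j]
        calc p0 j - δ ≤ p0 j := by linarith
          _ ≤ 1 / (ε * n) := hs j
      · rw [hp'other k h1 h2]; exact hs k
  have ha : 0 < p0 j - δ := by linarith
  have hREdiff : RE p' q - RE p0 q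
      = δ * Real.log (δ / q i)
        + ((p0 j - δ) * Real.log ((p0 j - δ) / q j) - p0 j * Real.log (p0 j / q j)) := by
    unfold RE
    rw [split (fun k => if p' k = 0 then 0 else p' k * Real.log (p' k / q k)),
      split (fun k => if p0 k = 0 then 0 else p0 k * Real.log (p0 k / q k))]
    simp only [hp'i, hp'j]
    rw [if_neg hδ.ne', if_neg ha.ne', if_pos hi0, if_neg hj0]
    have heqr : ∑ k ∈ (Finset.univ.erase i).erase j,
        (if p' k = 0 then 0 else p' k * Real.log (p' k / q k))
        = ∑ k ∈ (Finset.univ.erase i).erase j,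
        (if p0 k = 0 then 0 else p0 k * Real.log (p0 k / q k)) := by
      apply Finset.sum_congr rfl
      intro k hk
      have h2 := (Finset.mem_erase.mp hk).1
      have h1 := (Finset.mem_erase.mp (Finset.mem_erase.mp hk).2).1
      rw [hp'other k h1 h2]
    rw [heqr]
    ring
  have hb1 : (p0 j - δ) * Real.log (p0 j - δ) - p0 j * Real.log (p0 j)
      ≤ -δ * (Real.log (p0 j / 2) + 1) := by
    have := xlogx_line (p0 j - δ) (p0 j) ha hj
    have hlm : Real.log (p0 j / 2) ≤ Real.log (p0 j - δ) :=
      Real.log_le_log (by linarith) (by linarith)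
    nlinarith [this]
  have hbound : RE p' q - RE p0 q ≤ -δ := by
    rw [hREdiff, Real.log_div hδ.ne' (hq i).ne', Real.log_div ha.ne' (hq j).ne',
      Real.log_div hj0 (hq j).ne']
    have hlogδ' : Real.log δ ≤ Real.log (q i)
        - (Real.log (q j) - Real.log (p0 j / 2) - 1) - 1 := by rw [← hC]; exact hlogδ
    have e1 : δ * (Real.log δ - Real.log (q i))
        ≤ δ * (Real.log (p0 j / 2) - Real.log (q j)) := by
      apply mul_le_mul_of_nonneg_left _ hδ.le
      linarith
    nlinarith [hb1, e1]
  have := hmin p' hp'dist hp'smooth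
  linarith

lemma gamma_ineq (γ : ℝ) (hγ : 0 < γ) (hγh : γ ≤ 1/2) :
    Real.log (1 - γ * (1/2 + γ)) - Real.log (1 - γ) / 2 ≤ -γ^2 / 2 := by
  have hu : (1:ℝ)/2 ≤ 1 - γ * (1/2 + γ) := by nlinarith
  have hu0 : (0:ℝ) < 1 - γ * (1/2 + γ) := by linarith
  have h1γ : (0:ℝ) < 1 - γ := by linarith
  have hexp : 1 - γ^2 ≤ Real.exp (-γ^2) := by
    have := Real.add_one_le_exp (-γ^2); linarith
  have hkey : (1 - γ * (1/2 + γ))^2 ≤ (1 - γ) * Real.exp (-γ^2) := by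
    have h2 : (1 - γ * (1/2 + γ))^2 ≤ (1 - γ) * (1 - γ^2) := by nlinarith
    have h3 : (1 - γ) * (1 - γ^2) ≤ (1 - γ) * Real.exp (-γ^2) :=
      mul_le_mul_of_nonneg_left hexp h1γ.le
    linarith
  have hlog : Real.log ((1 - γ * (1/2 + γ))^2) ≤ Real.log ((1 - γ) * Real.exp (-γ^2)) :=
    Real.log_le_log (by positivity) hkey
  rw [Real.log_pow, Real.log_mul h1γ.ne' (Real.exp_pos _).ne', Real.log_exp] at hlog
  push_cast at hlog
  linarith

section qfun_facts
variable {n : ℕ} (γ : ℝ) (y hf Dt : Fin n → ℝ)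

lemma cfac_pos (hγ1 : γ < 1) : ∀ i, (0:ℝ) < (if hf i = y i then 1 - γ else 1) := by
  intro i; split <;> norm_num; linarith

lemma Z_pos (hn : 0 < n) (hγ1 : γ < 1) (hpos : ∀ i, 0 < Dt i) :
    0 < ∑ j, Dt j * (if hf j = y j then 1 - γ else 1) := by
  apply Finset.sum_pos
  · intro j _
    exact mul_pos (hpos j) (cfac_pos γ y hf hγ1 j)
  · exact ⟨⟨0, hn⟩, Finset.mem_univ _⟩

lemma qfun_pos (hn : 0 < n) (hγ1 : γ < 1) (hpos : ∀ i, 0 < Dt i) :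
    ∀ i, 0 < qfun γ y hf Dt i := by
  intro i
  exact div_pos (mul_pos (hpos i) (cfac_pos γ y hf hγ1 i)) (Z_pos γ y hf Dt hn hγ1 hpos)

lemma qfun_sum (hn : 0 < n) (hγ1 : γ < 1) (hpos : ∀ i, 0 < Dt i) :
    ∑ i, qfun γ y hf Dt i = 1 := by
  unfold qfun
  rw [← Finset.sum_div]
  exact div_self (Z_pos γ y hf Dt hn hγ1 hpos).ne'

end qfun_facts

lemma RE_qfun {n : ℕ} (γ : ℝ) (hγ0 : 0 < γ) (hγ1 : γ < 1) (hn : 0 < n)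
    (y hf Dt ps : Fin n → ℝ) (hpos : ∀ i, 0 < Dt i)
    (hpsn : ∀ i, 0 ≤ ps i) (hpss : ∑ i, ps i = 1) :
    RE ps (qfun γ y hf Dt)
      = RE ps Dt + Real.log (∑ j, Dt j * (if hf j = y j then 1 - γ else 1))
        - Real.log (1 - γ) * (∑ i ∈ Finset.univ.filter (fun i => hf i = y i), ps i) := by
  have hZ : 0 < ∑ j, Dt j * (if hf j = y j then 1 - γ else 1) := Z_pos γ y hf Dt hn hγ1 hpos
  set Z : ℝ := ∑ j, Dt j * (if hf j = y j then 1 - γ else 1) with hZdef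
  have hterm : ∀ i : Fin n,
      (if ps i = 0 then 0 else ps i * Real.log (ps i / qfun γ y hf Dt i))
      = (if ps i = 0 then 0 else ps i * Real.log (ps i / Dt i))
        + ps i * Real.log Z
        - (if hf i = y i then Real.log (1 - γ) else 0) * ps i := by
    intro i
    by_cases hpi : ps i = 0
    · simp [hpi]
    · rw [if_neg hpi, if_neg hpi]
      have hci : (0:ℝ) < (if hf i = y i then 1 - γ else 1) := cfac_pos γ y hf hγ1 i
      have hlogq : Real.log (ps i / qfun γ y hf Dt i)
          = Real.log (ps i / Dt i) + Real.log Z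
            - Real.log (if hf i = y i then 1 - γ else 1) := by
        unfold qfun
        rw [Real.log_div hpi (div_pos (mul_pos (hpos i) hci) hZ).ne',
          Real.log_div (mul_pos (hpos i) hci).ne' hZ.ne',
          Real.log_mul (hpos i).ne' hci.ne', Real.log_div hpi (hpos i).ne']
        ring
      have hlogc : Real.log (if hf i = y i then 1 - γ else 1)
          = (if hf i = y i then Real.log (1 - γ) else 0) := by
        by_cases hc : hf i = y i <;> simp [hc]
      rw [hlogq, hlogc]
      ring
  unfold RE
  rw [Finset.sum_congr rfl (fun i _ => hterm i)]
  rw [Finset.sum_sub_distrib, Finset.sum_add_distrib, ← Finset.sum_mul, hpss]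
  have hfil : ∑ i, (if hf i = y i then Real.log (1 - γ) else 0) * ps i
      = Real.log (1 - γ) * (∑ i ∈ Finset.univ.filter (fun i => hf i = y i), ps i) := by
    rw [Finset.sum_filter, Finset.mul_sum]
    apply Finset.sum_congr rfl
    intro i _
    by_cases hc : hf i = y i <;> simp [hc]
  rw [hfil]
  ring

/-- Theorem 1: correctness of the centralized smooth boosting algorithm. -/
theorem smooth_boosting_realizable
    (n : ℕ) (hn : 1 ≤ n) (ε γ : ℝ) (hε : 0 < ε) (hε1 : ε ≤ 1)
    (hγ : 0 < γ) (hγhalf : γ ≤ 1 / 2)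
    (y : Fin n → ℝ) (hy : ∀ i, y i = -1 ∨ y i = 1)
    (T : ℕ) (hT : (T : ℝ) > 2 * Real.log (1 / ε) / γ ^ 2)
    (h : ℕ → Fin n → ℝ) (hh : ∀ t < T, ∀ i, h t i = -1 ∨ h t i = 1)
    (D : ℕ → Fin n → ℝ)
    (hDdist : ∀ t < T, IsDistribution (D t))
    -- (i) the first distribution is uniform
    (hD0 : ∀ i, D 0 i = 1 / n)
    -- (ii) each distribution is ε-smooth
    (hDsmooth : ∀ t < T, IsSmooth ε (D t))
    -- (iii) weak learning: each hypothesis is correct with weight at least 1/2 + γ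
    (hweak : ∀ t < T,
      (1 / 2 + γ) ≤ ∑ i ∈ Finset.univ.filter (fun i => h t i = y i), D t i)
    -- (iv) multiplicative update followed by relative-entropy projection onto
    -- the set of ε-smooth distributions
    (hupdate : ∀ t, t + 1 < T →
      ∀ Dp : Fin n → ℝ, IsDistribution Dp → IsSmooth ε Dp →
        RE (D (t + 1))
            (fun i => D t i * (if h t i = y i then 1 - γ else 1) /
              (∑ j, D t j * (if h t j = y j then 1 - γ else 1))) ≤
          RE Dp
            (fun i => D t i * (if h t i = y i then 1 - γ else 1) /
              (∑ j, D t j * (if h t j = y j then 1 - γ else 1)))) :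
    ((Finset.univ.filter
        (fun i : Fin n => y i * ∑ t ∈ Finset.range T, h t i ≤ 0)).card : ℝ) <
      ε * n := by
  by_contra hcon
  push_neg at hcon
  set Err := Finset.univ.filter
      (fun i : Fin n => y i * ∑ t ∈ Finset.range T, h t i ≤ 0) with hErrDef
  have hnpos : (0:ℝ) < n := by exact_mod_cast hn
  have hn0 : 0 < n := hn
  have hεn : 0 < ε * n := mul_pos hε hnpos
  have hEpos : (0:ℝ) < (Err.card : ℝ) := lt_of_lt_of_le hεn hcon
  have hγ1 : γ < 1 := by linarith
  have h1γ : (0:ℝ) < 1 - γ := by linarith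
  set E : ℝ := (Err.card : ℝ) with hEdef
  set ps : Fin n → ℝ := fun i => if i ∈ Err then 1/E else 0 with hpsDef
  have hpsnn : ∀ i, 0 ≤ ps i := by
    intro i; rw [hpsDef]; dsimp only; split
    · positivity
    · exact le_refl 0
  have hpssum : ∑ i, ps i = 1 := by
    rw [hpsDef]
    calc ∑ i, (if i ∈ Err then 1/E else 0) = ∑ i ∈ Finset.univ ∩ Err, 1/E :=
          Finset.sum_ite_mem _ _ _
      _ = (Finset.univ ∩ Err).card * (1/E) := by rw [Finset.sum_const, nsmul_eq_mul]
      _ = E * (1/E) := by rw [Finset.univ_inter]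
      _ = 1 := by field_simp
  have hpsdist : IsDistribution ps := ⟨hpsnn, hpssum⟩
  have hpssmooth : IsSmooth ε ps := by
    intro i; rw [hpsDef]; dsimp only; split
    · exact one_div_le_one_div_of_le hεn hcon
    · positivity
  -- positivity of all the distributions
  have pos : ∀ t, t < T → ∀ i, 0 < D t i := by
    intro t
    induction t with
    | zero =>
      intro _ i
      rw [hD0 i]
      positivity
    | succ s ih =>
      intro hlt
      have hsT : s < T := Nat.lt_of_succ_lt hlt
      have hDpos := ih hsT
      exact minimizer_pos ε (qfun γ y (h s) (D s)) (D (s+1))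
        (qfun_pos γ y (h s) (D s) hn0 hγ1 hDpos)
        (hDdist _ hlt) (hDsmooth _ hlt)
        (fun p hd hsm => hupdate s hlt p hd hsm)
  -- abbreviations
  set Zf : ℕ → ℝ := fun s => ∑ j, D s j * (if h s j = y j then 1 - γ else 1) with hZfDef
  set Lf : ℕ → ℝ := fun s => ∑ i ∈ Finset.univ.filter (fun i => h s i = y i), ps i with hLfDef
  have hZpos : ∀ t, t < T → 0 < Zf t :=
    fun t ht => Z_pos γ y (h t) (D t) hn0 hγ1 (pos t ht)
  have hZle : ∀ t, t < T → Zf t ≤ 1 - γ * (1/2 + γ) := by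
    intro t ht
    have hZeq : Zf t = 1 - γ * ∑ i ∈ Finset.univ.filter (fun i => h t i = y i), D t i := by
      rw [hZfDef]
      dsimp only
      have hper : ∀ j : Fin n, D t j * (if h t j = y j then 1 - γ else 1)
          = D t j - γ * (if h t j = y j then D t j else 0) := by
        intro j
        by_cases hc : h t j = y j <;> simp [hc] <;> ring
      rw [Finset.sum_congr rfl (fun j _ => hper j), Finset.sum_sub_distrib,
        (hDdist t ht).2, ← Finset.mul_sum, Finset.sum_filter]
    rw [hZeq]
    have := hweak t ht
    nlinarith
  -- the per-round identity
  have hREq : ∀ t, t < T →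
      RE ps (qfun γ y (h t) (D t))
        = RE ps (D t) + Real.log (Zf t) - Real.log (1 - γ) * Lf t :=
    fun t ht => RE_qfun γ hγ hγ1 hn0 y (h t) (D t) ps (pos t ht) hpsnn hpssum
  -- initial relative entropy bound
  have hD0RE : RE ps (D 0) ≤ -Real.log ε := by
    have hbnd : ∀ i : Fin n,
        (if ps i = 0 then 0 else ps i * Real.log (ps i / D 0 i))
          ≤ (if i ∈ Err then (1/E) * (-Real.log ε) else 0) := by
      intro i
      by_cases hi : i ∈ Err
      · have hpsi : ps i = 1/E := by rw [hpsDef]; dsimp only; rw [if_pos hi]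
        have hpsne : ps i ≠ 0 := by rw [hpsi]; exact one_div_ne_zero hEpos.ne'
        rw [if_neg hpsne, if_pos hi, hpsi, hD0 i]
        have hlog : Real.log ((1/E) / ((1:ℝ)/n)) ≤ -Real.log ε := by
          rw [Real.log_div (one_div_ne_zero hEpos.ne' : (1:ℝ)/E ≠ 0) (one_div_ne_zero hnpos.ne' : (1:ℝ)/(n:ℝ) ≠ 0),
            one_div, one_div, Real.log_inv, Real.log_inv]
          have hle : Real.log (ε * n) ≤ Real.log E := Real.log_le_log hεn hcon
          rw [Real.log_mul hε.ne' hnpos.ne'] at hle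
          linarith
        exact mul_le_mul_of_nonneg_left hlog (one_div_pos.mpr hEpos).le
      · have hpsi : ps i = 0 := by rw [hpsDef]; dsimp only; rw [if_neg hi]
        rw [if_pos hpsi, if_neg hi]
    have hsum : RE ps (D 0) ≤ ∑ i, (if i ∈ Err then (1/E) * (-Real.log ε) else 0) :=
      Finset.sum_le_sum (fun i _ => hbnd i)
    have hval : ∑ i, (if i ∈ Err then (1/E) * (-Real.log ε) else 0) = -Real.log ε := by
      rw [Finset.sum_ite_mem, Finset.univ_inter, Finset.sum_const, nsmul_eq_mul]
      rw [← hEdef]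
      field_simp
    rw [hval] at hsum
    exact hsum
  -- telescoping chain
  have chain : ∀ t, t < T →
      RE ps (D t) ≤ -Real.log ε
        + ∑ s ∈ Finset.range t, (Real.log (Zf s) - Real.log (1 - γ) * Lf s) := by
    intro t
    induction t with
    | zero => intro _; simpa using hD0RE
    | succ s ih =>
      intro hlt
      have hsT : s < T := Nat.lt_of_succ_lt hlt
      have step : RE ps (D (s+1)) ≤ RE ps (qfun γ y (h s) (D s)) :=
        proj_le ε (qfun γ y (h s) (D s)) (D (s+1)) ps
          (qfun_pos γ y (h s) (D s) hn0 hγ1 (pos s hsT))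
          (qfun_sum γ y (h s) (D s) hn0 hγ1 (pos s hsT))
          (pos (s+1) hlt) (hDdist _ hlt) (hDsmooth _ hlt) hpsdist hpssmooth
          (fun p hd hsm => hupdate s hlt p hd hsm)
      rw [Finset.sum_range_succ]
      have hre := hREq s hsT
      have hih := ih hsT
      linarith
  -- last round
  have hT0 : 0 < T := by
    by_contra hT0
    have hTz : T = 0 := Nat.eq_zero_of_not_pos hT0
    rw [hTz] at hT
    have hnn : (0:ℝ) ≤ 2 * Real.log (1 / ε) / γ ^ 2 := by
      apply div_nonneg _ (by positivity)
      have h1e : (1:ℝ) ≤ 1/ε := (le_div_iff₀ hε).mpr (by linarith)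
      have := Real.log_nonneg h1e
      linarith
    push_cast at hT
    linarith
  have hT1 : T - 1 < T := Nat.sub_lt hT0 one_pos
  have hlast := hREq (T-1) hT1
  have h0le : 0 ≤ RE ps (qfun γ y (h (T-1)) (D (T-1))) :=
    RE_nonneg ps _ hpsnn hpssum
      (fun i => (qfun_pos γ y (h (T-1)) (D (T-1)) hn0 hγ1 (pos _ hT1) i).le)
      (le_of_eq (qfun_sum γ y (h (T-1)) (D (T-1)) hn0 hγ1 (pos _ hT1)))
      (fun i _ => qfun_pos γ y (h (T-1)) (D (T-1)) hn0 hγ1 (pos _ hT1) i)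
  have htot : 0 ≤ -Real.log ε
      + ∑ s ∈ Finset.range T, (Real.log (Zf s) - Real.log (1 - γ) * Lf s) := by
    have hTs : T - 1 + 1 = T := Nat.succ_pred_eq_of_pos hT0
    rw [← hTs, Finset.sum_range_succ]
    have hch := chain (T-1) hT1
    linarith
  -- bound the sum
  have hsplit : ∑ s ∈ Finset.range T, (Real.log (Zf s) - Real.log (1 - γ) * Lf s)
      = ∑ s ∈ Finset.range T, Real.log (Zf s)
        - Real.log (1 - γ) * ∑ s ∈ Finset.range T, Lf s := by
    rw [Finset.sum_sub_distrib, Finset.mul_sum]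
  have hZsum : ∑ s ∈ Finset.range T, Real.log (Zf s)
      ≤ T * Real.log (1 - γ * (1/2 + γ)) := by
    calc ∑ s ∈ Finset.range T, Real.log (Zf s)
        ≤ ∑ s ∈ Finset.range T, Real.log (1 - γ * (1/2 + γ)) :=
          Finset.sum_le_sum (fun s hs =>
            Real.log_le_log (hZpos s (Finset.mem_range.mp hs))
              (hZle s (Finset.mem_range.mp hs)))
      _ = T * Real.log (1 - γ * (1/2 + γ)) := by
          rw [Finset.sum_const, Finset.card_range, nsmul_eq_mul]
  -- count bound : ∑ Lf ≤ T/2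
  have hLsum : ∑ s ∈ Finset.range T, Lf s ≤ (T:ℝ)/2 := by
    have hswap : ∑ s ∈ Finset.range T, Lf s
        = ∑ i, (((Finset.range T).filter (fun t => h t i = y i)).card : ℝ) * ps i := by
      rw [hLfDef]
      dsimp only
      have h1 : ∀ s, ∑ i ∈ Finset.univ.filter (fun i => h s i = y i), ps i
          = ∑ i, (if h s i = y i then ps i else 0) := fun s => Finset.sum_filter _ _
      rw [Finset.sum_congr rfl (fun s _ => h1 s), Finset.sum_comm]
      apply Finset.sum_congr rfl
      intro i _
      rw [← Finset.sum_filter, Finset.sum_const, nsmul_eq_mul]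
    rw [hswap]
    have hbnd : ∀ i : Fin n,
        (((Finset.range T).filter (fun t => h t i = y i)).card : ℝ) * ps i
          ≤ ((T:ℝ)/2) * ps i := by
      intro i
      by_cases hi : i ∈ Err
      · apply mul_le_mul_of_nonneg_right _ (hpsnn i)
        -- majority vote wrong on i: at most T/2 rounds correct
        have hiErr : y i * ∑ t ∈ Finset.range T, h t i ≤ 0 := by
          rw [hErrDef] at hi
          exact (Finset.mem_filter.mp hi).2
        have hexp : y i * ∑ t ∈ Finset.range T, h t i
            = 2 * (((Finset.range T).filter (fun t => h t i = y i)).card : ℝ) - T := by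
          rw [Finset.mul_sum]
          have hper : ∀ t ∈ Finset.range T,
              y i * h t i = 2 * (if h t i = y i then (1:ℝ) else 0) - 1 := by
            intro t ht
            by_cases hc : h t i = y i
            · rw [if_pos hc, hc]
              rcases hy i with h1 | h1 <;> rw [h1] <;> norm_num
            · rw [if_neg hc]
              rcases hy i with h1 | h1 <;> rcases hh t (Finset.mem_range.mp ht) i with h2 | h2
              · exact absurd (h2.trans h1.symm) hc
              · rw [h1, h2]; norm_num
              · rw [h1, h2]; norm_num
              · exact absurd (h2.trans h1.symm) hc
          rw [Finset.sum_congr rfl hper, Finset.sum_sub_distrib, ← Finset.mul_sum,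
            Finset.sum_boole, Finset.sum_const, Finset.card_range, nsmul_eq_mul, mul_one]
        rw [hexp] at hiErr
        linarith
      · have hpsi : ps i = 0 := by rw [hpsDef]; dsimp only; rw [if_neg hi]
        rw [hpsi]
        simp
    calc ∑ i, (((Finset.range T).filter (fun t => h t i = y i)).card : ℝ) * ps i
        ≤ ∑ i, ((T:ℝ)/2) * ps i := Finset.sum_le_sum (fun i _ => hbnd i)
      _ = (T:ℝ)/2 := by rw [← Finset.mul_sum, hpssum, mul_one]
  -- put it all together
  have hlog1γ : Real.log (1 - γ) ≤ 0 := Real.log_nonpos (by linarith) (by linarith)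
  have hmul : -Real.log (1 - γ) * ∑ s ∈ Finset.range T, Lf s
      ≤ -Real.log (1 - γ) * ((T:ℝ)/2) :=
    mul_le_mul_of_nonneg_left hLsum (by linarith)
  have hγin := gamma_ineq γ hγ hγhalf
  have hγin' : (T:ℝ) * Real.log (1 - γ * (1/2 + γ))
      ≤ (T:ℝ) * (Real.log (1 - γ) / 2 - γ^2/2) :=
    mul_le_mul_of_nonneg_left (by linarith) (by positivity)
  have hfinal : 0 ≤ -Real.log ε - (T:ℝ) * γ^2 / 2 := by
    rw [hsplit] at htot
    linarith [htot, hZsum, hmul, hγin']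
  have hlogeps : Real.log (1/ε) = -Real.log ε := by rw [one_div, Real.log_inv]
  rw [hlogeps] at hT
  have hγ2 : (0:ℝ) < γ^2 := by positivity
  have hTlarge : 2 * (-Real.log ε) < (T:ℝ) * γ^2 := by
    have := (div_lt_iff₀ hγ2).mp hT
    linarith
  linarith
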